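/- For every c ∈ ℂ, the N.7_c bracket table satisfies the Jacobi identity, so it defines a 7-dimensional complex Lie algebra 𝔣. Moreover: 𝔣 is solvable; the subspace I := span{N, X2, X3, X4, X5} is an ideal of 𝔣 isomorphic to the 5-dimensional Heisenberg Lie algebra (its only nonzero basis brackets are [N,X4]=-X5 and [X2,X3]=-3X5, and its center is spanned by X5); and span{T, X1} is a 2-dimensional abelian subalgebra of 𝔣 complementary to I, so 𝔣 is a semidirect product ℂ² ⋉ heis₅. -/

import Mathlib

set_option maxHeartbeats 1000000

noncomputable def n7c (c : ℂ) : Fin 7 → Fin 7 → Fin 7 → ℂ :=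
  ![![![0, 0, 0, 0, 0, 0, 0],
     ![0, (-1), 0, 0, 0, 0, 0],
     ![0, 0, 0, 0, 0, 0, 0],
     ![0, 0, 0, (-1), 0, 0, 0],
     ![0, 0, 0, 0, (-1), 0, 0],
     ![0, 0, 0, 0, 0, (-1), 0],
     ![0, 0, 0, 0, 0, 0, (-2)]],
   ![![0, 1, 0, 0, 0, 0, 0],
     ![0, 0, 0, 0, 0, 0, 0],
     ![0, 0, 0, 1, 0, 0, 0],
     ![0, 0, 0, 0, 0, 0, 0],
     ![0, 0, 0, 0, 0, 0, 0],
     ![0, 0, 0, 0, 0, 0, (-1)],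
     ![0, 0, 0, 0, 0, 0, 0]],
   ![![0, 0, 0, 0, 0, 0, 0],
     ![0, 0, 0, (-1), 0, 0, 0],
     ![0, 0, 0, 0, 0, 0, 0],
     ![0, (-(3*c)), 0, 0, (-2), 0, 0],
     ![0, 0, 0, (-(2*c)), 0, 3, 0],
     ![0, (-1), 0, 0, (c), 0, 0],
     ![0, 0, 0, 0, 0, 0, 0]],
   ![![0, 0, 0, 1, 0, 0, 0],
     ![0, 0, 0, 0, 0, 0, 0],
     ![0, (-(-(3*c))), 0, 0, 2, 0, 0],
     ![0, 0, 0, 0, 0, 0, 0],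
     ![0, 0, 0, 0, 0, 0, (-3)],
     ![0, 0, 0, 0, 0, 0, 0],
     ![0, 0, 0, 0, 0, 0, 0]],
   ![![0, 0, 0, 0, 1, 0, 0],
     ![0, 0, 0, 0, 0, 0, 0],
     ![0, 0, 0, (-(-(2*c))), 0, (-3), 0],
     ![0, 0, 0, 0, 0, 0, 3],
     ![0, 0, 0, 0, 0, 0, 0],
     ![0, 0, 0, 0, 0, 0, 0],
     ![0, 0, 0, 0, 0, 0, 0]],
   ![![0, 0, 0, 0, 0, 1, 0],
     ![0, 0, 0, 0, 0, 0, 1],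
     ![0, 1, 0, 0, (-(c)), 0, 0],
     ![0, 0, 0, 0, 0, 0, 0],
     ![0, 0, 0, 0, 0, 0, 0],
     ![0, 0, 0, 0, 0, 0, 0],
     ![0, 0, 0, 0, 0, 0, 0]],
   ![![0, 0, 0, 0, 0, 0, 2],
     ![0, 0, 0, 0, 0, 0, 0],
     ![0, 0, 0, 0, 0, 0, 0],
     ![0, 0, 0, 0, 0, 0, 0],
     ![0, 0, 0, 0, 0, 0, 0],
     ![0, 0, 0, 0, 0, 0, 0],
     ![0, 0, 0, 0, 0, 0, 0]]]

noncomputable def n7br (c : ℂ) (x y : Fin 7 → ℂ) : Fin 7 → ℂ :=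
  fun k => ∑ i : Fin 7, ∑ j : Fin 7, x i * y j * n7c c i j k


section helpers
variable {α : Type*}
lemma cv0 (a0 a1 a2 a3 a4 a5 a6 : α) : ![a0,a1,a2,a3,a4,a5,a6] (0 : Fin 7) = a0 := rfl
lemma cv1 (a0 a1 a2 a3 a4 a5 a6 : α) : ![a0,a1,a2,a3,a4,a5,a6] (1 : Fin 7) = a1 := rfl
lemma cv2 (a0 a1 a2 a3 a4 a5 a6 : α) : ![a0,a1,a2,a3,a4,a5,a6] (2 : Fin 7) = a2 := rfl
lemma cv3 (a0 a1 a2 a3 a4 a5 a6 : α) : ![a0,a1,a2,a3,a4,a5,a6] (3 : Fin 7) = a3 := rfl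
lemma cv4 (a0 a1 a2 a3 a4 a5 a6 : α) : ![a0,a1,a2,a3,a4,a5,a6] (4 : Fin 7) = a4 := rfl
lemma cv5 (a0 a1 a2 a3 a4 a5 a6 : α) : ![a0,a1,a2,a3,a4,a5,a6] (5 : Fin 7) = a5 := rfl
lemma cv6 (a0 a1 a2 a3 a4 a5 a6 : α) : ![a0,a1,a2,a3,a4,a5,a6] (6 : Fin 7) = a6 := rfl
lemma cw0 (a0 a1 a2 a3 a4 : α) : ![a0,a1,a2,a3,a4] (0 : Fin 5) = a0 := rfl
lemma cw1 (a0 a1 a2 a3 a4 : α) : ![a0,a1,a2,a3,a4] (1 : Fin 5) = a1 := rfl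
lemma cw2 (a0 a1 a2 a3 a4 : α) : ![a0,a1,a2,a3,a4] (2 : Fin 5) = a2 := rfl
lemma cw3 (a0 a1 a2 a3 a4 : α) : ![a0,a1,a2,a3,a4] (3 : Fin 5) = a3 := rfl
lemma cw4 (a0 a1 a2 a3 a4 : α) : ![a0,a1,a2,a3,a4] (4 : Fin 5) = a4 := rfl
lemma funext7 {f g : Fin 7 → α} (h0 : f 0 = g 0) (h1 : f 1 = g 1) (h2 : f 2 = g 2)
    (h3 : f 3 = g 3) (h4 : f 4 = g 4) (h5 : f 5 = g 5) (h6 : f 6 = g 6) : f = g := by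
  funext k
  fin_cases k <;> assumption
lemma range7 (a0 a1 a2 a3 a4 a5 a6 : α) :
    Set.range ![a0,a1,a2,a3,a4,a5,a6] = ({a0,a1,a2,a3,a4,a5,a6} : Set α) := by
  ext y
  simp only [Matrix.range_cons, Matrix.range_empty, Set.union_empty, Set.mem_union,
    Set.mem_singleton_iff, Set.mem_insert_iff]
lemma range5 (a0 a1 a2 a3 a4 : α) :
    Set.range ![a0,a1,a2,a3,a4] = ({a0,a1,a2,a3,a4} : Set α) := by
  ext y
  simp only [Matrix.range_cons, Matrix.range_empty, Set.union_empty, Set.mem_union,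
    Set.mem_singleton_iff, Set.mem_insert_iff]
end helpers

theorem n7br_apply (c : ℂ) (x y : Fin 7 → ℂ) : n7br c x y =
    ![0,
      -(x 0 * y 1) + x 1 * y 0 - 3*c * (x 2 * y 3) - x 2 * y 5 + 3*c * (x 3 * y 2) + x 5 * y 2,
      0,
      -(x 0 * y 3) + x 1 * y 2 - x 2 * y 1 - 2*c * (x 2 * y 4) + x 3 * y 0 + 2*c * (x 4 * y 2),
      -(x 0 * y 4) - 2 * (x 2 * y 3) + 2 * (x 3 * y 2) + c * (x 2 * y 5) - c * (x 5 * y 2) + x 4 * y 0,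
      -(x 0 * y 5) + 3 * (x 2 * y 4) - 3 * (x 4 * y 2) + x 5 * y 0,
      -2 * (x 0 * y 6) - x 1 * y 5 - 3 * (x 3 * y 4) + 3 * (x 4 * y 3) + x 5 * y 1 + 2 * (x 6 * y 0)] := by
  apply funext7 <;>
  · simp only [n7br, n7c, Fin.sum_univ_seven, cv0, cv1, cv2, cv3, cv4, cv5, cv6]
    ring

theorem n7_jacobi (c : ℂ) : ∀ x y z : Fin 7 → ℂ,
      n7br c x (n7br c y z) + n7br c y (n7br c z x) + n7br c z (n7br c x y) = 0 := by
  intro x y z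
  rw [n7br_apply c y z, n7br_apply c z x, n7br_apply c x y,
    n7br_apply, n7br_apply, n7br_apply]
  apply funext7 <;>
  · simp only [cv0, cv1, cv2, cv3, cv4, cv5, cv6, Pi.add_apply, Pi.zero_apply]
    ring


theorem N7_table_defines_solvable_lie_algebra (c : ℂ)
    {F : Type*} [LieRing F] [LieAlgebra ℂ F]
    (T N X1 X2 X3 X4 X5 : F)
    (hbindep : LinearIndependent ℂ ![T, N, X1, X2, X3, X4, X5])
    (hbspan : Submodule.span ℂ (Set.range ![T, N, X1, X2, X3, X4, X5]) = ⊤)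
    (hb01 : ⁅T, N⁆ = -N)
    (hb02 : ⁅T, X1⁆ = 0)
    (hb03 : ⁅T, X2⁆ = -X2)
    (hb04 : ⁅T, X3⁆ = -X3)
    (hb05 : ⁅T, X4⁆ = -X4)
    (hb06 : ⁅T, X5⁆ = (-2 : ℂ) • X5)
    (hb12 : ⁅N, X1⁆ = X2)
    (hb13 : ⁅N, X2⁆ = 0)
    (hb14 : ⁅N, X3⁆ = 0)
    (hb15 : ⁅N, X4⁆ = -X5)
    (hb16 : ⁅N, X5⁆ = 0)
    (hb23 : ⁅X1, X2⁆ = (-(3*c)) • N + (-2 : ℂ) • X3)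
    (hb24 : ⁅X1, X3⁆ = (-(2*c)) • X2 + (3 : ℂ) • X4)
    (hb25 : ⁅X1, X4⁆ = -N + (c) • X3)
    (hb26 : ⁅X1, X5⁆ = 0)
    (hb34 : ⁅X2, X3⁆ = (-3 : ℂ) • X5)
    (hb35 : ⁅X2, X4⁆ = 0)
    (hb36 : ⁅X2, X5⁆ = 0)
    (hb45 : ⁅X3, X4⁆ = 0)
    (hb46 : ⁅X3, X5⁆ = 0)
    (hb56 : ⁅X4, X5⁆ = 0) :
    (∀ x y z : Fin 7 → ℂ,
      n7br c x (n7br c y z) + n7br c y (n7br c z x) + n7br c z (n7br c x y) = 0) ∧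
    LieAlgebra.IsSolvable F ∧
    (∀ x : F, ∀ y ∈ (Submodule.span ℂ ({N, X2, X3, X4, X5} : Set F)), ⁅x, y⁆ ∈ (Submodule.span ℂ ({N, X2, X3, X4, X5} : Set F))) ∧
    (∃ p1 p2 q1 q2 z : F,
      Submodule.span ℂ ({p1, p2, q1, q2, z} : Set F) = (Submodule.span ℂ ({N, X2, X3, X4, X5} : Set F)) ∧
      LinearIndependent ℂ ![p1, p2, q1, q2, z] ∧
      ⁅p1, q1⁆ = z ∧ ⁅p2, q2⁆ = z ∧ ⁅p1, p2⁆ = 0 ∧ ⁅p1, q2⁆ = 0 ∧ ⁅p1, z⁆ = 0 ∧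
      ⁅p2, q1⁆ = 0 ∧ ⁅p2, z⁆ = 0 ∧ ⁅q1, q2⁆ = 0 ∧ ⁅q1, z⁆ = 0 ∧ ⁅q2, z⁆ = 0) ∧
    (∀ y ∈ (Submodule.span ℂ ({N, X2, X3, X4, X5} : Set F)),
      ((∀ x ∈ (Submodule.span ℂ ({N, X2, X3, X4, X5} : Set F)), ⁅x, y⁆ = 0) ↔ y ∈ Submodule.span ℂ ({X5} : Set F))) ∧
    ⁅T, X1⁆ = 0 ∧
    Submodule.span ℂ ({T, X1} : Set F) ⊔ (Submodule.span ℂ ({N, X2, X3, X4, X5} : Set F)) = ⊤ ∧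
    Submodule.span ℂ ({T, X1} : Set F) ⊓ (Submodule.span ℂ ({N, X2, X3, X4, X5} : Set F)) = ⊥ := by

  -- abbreviations
  have hrange7 : Set.range ![T, N, X1, X2, X3, X4, X5] = ({T, N, X1, X2, X3, X4, X5} : Set F) :=
    range7 T N X1 X2 X3 X4 X5
  have hspan7 : Submodule.span ℂ ({T, N, X1, X2, X3, X4, X5} : Set F) = ⊤ := by
    rw [← hrange7]; exact hbspan
  -- reversed brackets
  have rb10 : ⁅N, T⁆ = N := by rw [← lie_skew, hb01, neg_neg]
  have rb20 : ⁅X1, T⁆ = 0 := by rw [← lie_skew, hb02, neg_zero]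
  have rb12 : ⁅X1, N⁆ = -X2 := by rw [← lie_skew, hb12]
  have rb13 : ⁅X2, N⁆ = 0 := by rw [← lie_skew, hb13, neg_zero]
  have rb14 : ⁅X3, N⁆ = 0 := by rw [← lie_skew, hb14, neg_zero]
  have rb15 : ⁅X4, N⁆ = X5 := by rw [← lie_skew, hb15, neg_neg]
  have rb16 : ⁅X5, N⁆ = 0 := by rw [← lie_skew, hb16, neg_zero]
  have rb34 : ⁅X3, X2⁆ = (3 : ℂ) • X5 := by
    rw [← lie_skew, hb34, neg_smul]; module
  have rb35 : ⁅X4, X2⁆ = 0 := by rw [← lie_skew, hb35, neg_zero]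
  have rb36 : ⁅X5, X2⁆ = 0 := by rw [← lie_skew, hb36, neg_zero]
  have rb45 : ⁅X4, X3⁆ = 0 := by rw [← lie_skew, hb45, neg_zero]
  have rb46 : ⁅X5, X3⁆ = 0 := by rw [← lie_skew, hb46, neg_zero]
  have rb56 : ⁅X5, X4⁆ = 0 := by rw [← lie_skew, hb56, neg_zero]
  -- membership of generators
  have hN : N ∈ Submodule.span ℂ ({N, X2, X3, X4, X5} : Set F) := Submodule.subset_span (by simp)
  have hX2m : X2 ∈ Submodule.span ℂ ({N, X2, X3, X4, X5} : Set F) := Submodule.subset_span (by simp)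
  have hX3m : X3 ∈ Submodule.span ℂ ({N, X2, X3, X4, X5} : Set F) := Submodule.subset_span (by simp)
  have hX4m : X4 ∈ Submodule.span ℂ ({N, X2, X3, X4, X5} : Set F) := Submodule.subset_span (by simp)
  have hX5m : X5 ∈ Submodule.span ℂ ({N, X2, X3, X4, X5} : Set F) := Submodule.subset_span (by simp)
  -- bracket of any generator with any element of S lies in S
  have hgenS : ∀ g ∈ ({T, N, X1, X2, X3, X4, X5} : Set F),
      ∀ y ∈ Submodule.span ℂ ({N, X2, X3, X4, X5} : Set F),
      ⁅g, y⁆ ∈ Submodule.span ℂ ({N, X2, X3, X4, X5} : Set F) := by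
    intro g hg y hy
    induction hy using Submodule.span_induction with
    | mem a ha =>
      simp only [Set.mem_insert_iff, Set.mem_singleton_iff] at hg ha
      rcases hg with rfl | rfl | rfl | rfl | rfl | rfl | rfl <;>
        rcases ha with rfl | rfl | rfl | rfl | rfl <;>
        first
        | (rw [lie_self]; exact Submodule.zero_mem _)
        | (rw [hb01]; exact neg_mem hN)
        | (rw [hb03]; exact neg_mem hX2m)
        | (rw [hb04]; exact neg_mem hX3m)
        | (rw [hb05]; exact neg_mem hX4m)
        | (rw [hb06]; exact Submodule.smul_mem _ _ hX5m)
        | (rw [hb13]; exact Submodule.zero_mem _)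
        | (rw [hb14]; exact Submodule.zero_mem _)
        | (rw [hb15]; exact neg_mem hX5m)
        | (rw [hb16]; exact Submodule.zero_mem _)
        | (rw [rb12]; exact neg_mem hX2m)
        | (rw [hb23]; exact add_mem (Submodule.smul_mem _ _ hN) (Submodule.smul_mem _ _ hX3m))
        | (rw [hb24]; exact add_mem (Submodule.smul_mem _ _ hX2m) (Submodule.smul_mem _ _ hX4m))
        | (rw [hb25]; exact add_mem (neg_mem hN) (Submodule.smul_mem _ _ hX3m))
        | (rw [hb26]; exact Submodule.zero_mem _)
        | (rw [rb13]; exact Submodule.zero_mem _)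
        | (rw [hb34]; exact Submodule.smul_mem _ _ hX5m)
        | (rw [hb35]; exact Submodule.zero_mem _)
        | (rw [hb36]; exact Submodule.zero_mem _)
        | (rw [rb14]; exact Submodule.zero_mem _)
        | (rw [rb34]; exact Submodule.smul_mem _ _ hX5m)
        | (rw [hb45]; exact Submodule.zero_mem _)
        | (rw [hb46]; exact Submodule.zero_mem _)
        | (rw [rb15]; exact hX5m)
        | (rw [rb35]; exact Submodule.zero_mem _)
        | (rw [rb45]; exact Submodule.zero_mem _)
        | (rw [hb56]; exact Submodule.zero_mem _)
        | (rw [rb16]; exact Submodule.zero_mem _)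
        | (rw [rb36]; exact Submodule.zero_mem _)
        | (rw [rb46]; exact Submodule.zero_mem _)
        | (rw [rb56]; exact Submodule.zero_mem _)
    | zero => rw [lie_zero]; exact Submodule.zero_mem _
    | add a b ha hb iha ihb => rw [lie_add]; exact add_mem iha ihb
    | smul t a ha iha => rw [lie_smul]; exact Submodule.smul_mem _ _ iha
  -- S is an ideal
  have hIdeal : ∀ x : F, ∀ y ∈ Submodule.span ℂ ({N, X2, X3, X4, X5} : Set F),
      ⁅x, y⁆ ∈ Submodule.span ℂ ({N, X2, X3, X4, X5} : Set F) := by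
    intro x y hy
    have hx : x ∈ Submodule.span ℂ ({T, N, X1, X2, X3, X4, X5} : Set F) := by
      rw [hspan7]; exact Submodule.mem_top
    induction hx using Submodule.span_induction with
    | mem a ha => exact hgenS a ha y hy
    | zero => rw [zero_lie]; exact Submodule.zero_mem _
    | add a b ha hb iha ihb => rw [add_lie]; exact add_mem iha ihb
    | smul t a ha iha => rw [smul_lie]; exact Submodule.smul_mem _ _ iha
  -- brackets with T and X1 on the left stay in S
  have hTx : ∀ x : F, ⁅T, x⁆ ∈ Submodule.span ℂ ({N, X2, X3, X4, X5} : Set F) := by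
    intro x
    have hx : x ∈ Submodule.span ℂ ({T, N, X1, X2, X3, X4, X5} : Set F) := by
      rw [hspan7]; exact Submodule.mem_top
    induction hx using Submodule.span_induction with
    | mem a ha =>
      simp only [Set.mem_insert_iff, Set.mem_singleton_iff] at ha
      rcases ha with rfl | rfl | rfl | rfl | rfl | rfl | rfl
      · rw [lie_self]; exact Submodule.zero_mem _
      · rw [hb01]; exact neg_mem hN
      · rw [hb02]; exact Submodule.zero_mem _
      · rw [hb03]; exact neg_mem hX2m
      · rw [hb04]; exact neg_mem hX3m
      · rw [hb05]; exact neg_mem hX4m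
      · rw [hb06]; exact Submodule.smul_mem _ _ hX5m
    | zero => rw [lie_zero]; exact Submodule.zero_mem _
    | add a b ha hb iha ihb => rw [lie_add]; exact add_mem iha ihb
    | smul t a ha iha => rw [lie_smul]; exact Submodule.smul_mem _ _ iha
  have hX1x : ∀ x : F, ⁅X1, x⁆ ∈ Submodule.span ℂ ({N, X2, X3, X4, X5} : Set F) := by
    intro x
    have hx : x ∈ Submodule.span ℂ ({T, N, X1, X2, X3, X4, X5} : Set F) := by
      rw [hspan7]; exact Submodule.mem_top
    induction hx using Submodule.span_induction with
    | mem a ha =>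
      simp only [Set.mem_insert_iff, Set.mem_singleton_iff] at ha
      rcases ha with rfl | rfl | rfl | rfl | rfl | rfl | rfl
      · rw [rb20]; exact Submodule.zero_mem _
      · rw [rb12]; exact neg_mem hX2m
      · rw [lie_self]; exact Submodule.zero_mem _
      · rw [hb23]; exact add_mem (Submodule.smul_mem _ _ hN) (Submodule.smul_mem _ _ hX3m)
      · rw [hb24]; exact add_mem (Submodule.smul_mem _ _ hX2m) (Submodule.smul_mem _ _ hX4m)
      · rw [hb25]; exact add_mem (neg_mem hN) (Submodule.smul_mem _ _ hX3m)
      · rw [hb26]; exact Submodule.zero_mem _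
    | zero => rw [lie_zero]; exact Submodule.zero_mem _
    | add a b ha hb iha ihb => rw [lie_add]; exact add_mem iha ihb
    | smul t a ha iha => rw [lie_smul]; exact Submodule.smul_mem _ _ iha
  -- every bracket lies in S
  have hbrall : ∀ x y : F, ⁅x, y⁆ ∈ Submodule.span ℂ ({N, X2, X3, X4, X5} : Set F) := by
    intro x y
    have hy : y ∈ Submodule.span ℂ ({T, N, X1, X2, X3, X4, X5} : Set F) := by
      rw [hspan7]; exact Submodule.mem_top
    induction hy using Submodule.span_induction with
    | mem a ha =>
      simp only [Set.mem_insert_iff, Set.mem_singleton_iff] at ha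
      rcases ha with rfl | rfl | rfl | rfl | rfl | rfl | rfl
      · rw [← lie_skew]; exact neg_mem (hTx x)
      · exact hIdeal x _ hN
      · rw [← lie_skew]; exact neg_mem (hX1x x)
      · exact hIdeal x _ hX2m
      · exact hIdeal x _ hX3m
      · exact hIdeal x _ hX4m
      · exact hIdeal x _ hX5m
    | zero => rw [lie_zero]; exact Submodule.zero_mem _
    | add a b ha hb iha ihb => rw [lie_add]; exact add_mem iha ihb
    | smul t a ha iha => rw [lie_smul]; exact Submodule.smul_mem _ _ iha
  -- brackets of two elements of S land in span{X5}
  have hX5z : X5 ∈ Submodule.span ℂ ({X5} : Set F) := Submodule.subset_span rfl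
  have hSS : ∀ a ∈ Submodule.span ℂ ({N, X2, X3, X4, X5} : Set F),
      ∀ b ∈ Submodule.span ℂ ({N, X2, X3, X4, X5} : Set F),
      ⁅a, b⁆ ∈ Submodule.span ℂ ({X5} : Set F) := by
    have hgen : ∀ g ∈ ({N, X2, X3, X4, X5} : Set F),
        ∀ b ∈ Submodule.span ℂ ({N, X2, X3, X4, X5} : Set F),
        ⁅g, b⁆ ∈ Submodule.span ℂ ({X5} : Set F) := by
      intro g hg b hb
      induction hb using Submodule.span_induction with
      | mem a ha =>
        simp only [Set.mem_insert_iff, Set.mem_singleton_iff] at hg ha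
        rcases hg with rfl | rfl | rfl | rfl | rfl <;>
          rcases ha with rfl | rfl | rfl | rfl | rfl <;>
          first
          | (rw [lie_self]; exact Submodule.zero_mem _)
          | (rw [hb13]; exact Submodule.zero_mem _)
          | (rw [hb14]; exact Submodule.zero_mem _)
          | (rw [hb15]; exact neg_mem hX5z)
          | (rw [hb16]; exact Submodule.zero_mem _)
          | (rw [rb13]; exact Submodule.zero_mem _)
          | (rw [hb34]; exact Submodule.smul_mem _ _ hX5z)
          | (rw [hb35]; exact Submodule.zero_mem _)
          | (rw [hb36]; exact Submodule.zero_mem _)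
          | (rw [rb14]; exact Submodule.zero_mem _)
          | (rw [rb34]; exact Submodule.smul_mem _ _ hX5z)
          | (rw [hb45]; exact Submodule.zero_mem _)
          | (rw [hb46]; exact Submodule.zero_mem _)
          | (rw [rb15]; exact hX5z)
          | (rw [rb35]; exact Submodule.zero_mem _)
          | (rw [rb45]; exact Submodule.zero_mem _)
          | (rw [hb56]; exact Submodule.zero_mem _)
          | (rw [rb16]; exact Submodule.zero_mem _)
          | (rw [rb36]; exact Submodule.zero_mem _)
          | (rw [rb46]; exact Submodule.zero_mem _)
          | (rw [rb56]; exact Submodule.zero_mem _)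
      | zero => rw [lie_zero]; exact Submodule.zero_mem _
      | add a b ha hb iha ihb => rw [lie_add]; exact add_mem iha ihb
      | smul t a ha iha => rw [lie_smul]; exact Submodule.smul_mem _ _ iha
    intro a ha b hb
    induction ha using Submodule.span_induction with
    | mem g hg => exact hgen g hg b hb
    | zero => rw [zero_lie]; exact Submodule.zero_mem _
    | add u v hu hv ihu ihv => rw [add_lie]; exact add_mem ihu ihv
    | smul t u hu ihu => rw [smul_lie]; exact Submodule.smul_mem _ _ ihu
  -- span{X5} is an ideal
  have hZid : ∀ x : F, ∀ y ∈ Submodule.span ℂ ({X5} : Set F),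
      ⁅x, y⁆ ∈ Submodule.span ℂ ({X5} : Set F) := by
    intro x y hy
    obtain ⟨t, rfl⟩ := Submodule.mem_span_singleton.mp hy
    rw [lie_smul]
    refine Submodule.smul_mem _ _ ?_
    have hx : x ∈ Submodule.span ℂ ({T, N, X1, X2, X3, X4, X5} : Set F) := by
      rw [hspan7]; exact Submodule.mem_top
    induction hx using Submodule.span_induction with
    | mem a ha =>
      simp only [Set.mem_insert_iff, Set.mem_singleton_iff] at ha
      rcases ha with rfl | rfl | rfl | rfl | rfl | rfl | rfl
      · rw [hb06]; exact Submodule.smul_mem _ _ hX5z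
      · rw [hb16]; exact Submodule.zero_mem _
      · rw [hb26]; exact Submodule.zero_mem _
      · rw [hb36]; exact Submodule.zero_mem _
      · rw [hb46]; exact Submodule.zero_mem _
      · rw [hb56]; exact Submodule.zero_mem _
      · rw [lie_self]; exact Submodule.zero_mem _
    | zero => rw [zero_lie]; exact Submodule.zero_mem _
    | add a b ha hb iha ihb => rw [add_lie]; exact add_mem iha ihb
    | smul s a ha iha => rw [smul_lie]; exact Submodule.smul_mem _ _ iha
  -- X5 is nonzero
  have hX5ne : X5 ≠ 0 := by
    have := hbindep.ne_zero 6
    simpa [cv6] using this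
  have hcoeff : ∀ t : ℂ, t • X5 = 0 → t = 0 := by
    intro t ht
    rcases smul_eq_zero.mp ht with h | h
    · exact h
    · exact absurd h hX5ne
  refine ⟨n7_jacobi c, ?_, hIdeal, ?_, ?_, hb02, ?_, ?_⟩
  · -- Solvability
    let I : LieIdeal ℂ F :=
      { Submodule.span ℂ ({N, X2, X3, X4, X5} : Set F) with
        lie_mem := fun {x} {m} hm => hIdeal x m hm }
    let Z : LieIdeal ℂ F :=
      { Submodule.span ℂ ({X5} : Set F) with
        lie_mem := fun {x} {m} hm => hZid x m hm }
    have hmemI : ∀ x : F, x ∈ I ↔ x ∈ Submodule.span ℂ ({N, X2, X3, X4, X5} : Set F) :=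
      fun x => Iff.rfl
    have hmemZ : ∀ x : F, x ∈ Z ↔ x ∈ Submodule.span ℂ ({X5} : Set F) := fun x => Iff.rfl
    have e1 : LieAlgebra.derivedSeries ℂ F 1 = ⁅(⊤ : LieIdeal ℂ F), (⊤ : LieIdeal ℂ F)⁆ := by
      rw [LieAlgebra.derivedSeries_def, LieAlgebra.derivedSeriesOfIdeal_succ,
        LieAlgebra.derivedSeriesOfIdeal_zero]
    have e2 : LieAlgebra.derivedSeries ℂ F 2 =
        ⁅LieAlgebra.derivedSeries ℂ F 1, LieAlgebra.derivedSeries ℂ F 1⁆ := by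
      rw [LieAlgebra.derivedSeries_def, LieAlgebra.derivedSeriesOfIdeal_succ]
    have e3 : LieAlgebra.derivedSeries ℂ F 3 =
        ⁅LieAlgebra.derivedSeries ℂ F 2, LieAlgebra.derivedSeries ℂ F 2⁆ := by
      rw [LieAlgebra.derivedSeries_def, LieAlgebra.derivedSeriesOfIdeal_succ]
    have h1 : LieAlgebra.derivedSeries ℂ F 1 ≤ I := by
      rw [e1, LieSubmodule.lie_le_iff]
      exact fun x _ m _ => hbrall x m
    have h2 : LieAlgebra.derivedSeries ℂ F 2 ≤ Z := by
      rw [e2, LieSubmodule.lie_le_iff]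
      intro x hx m hm
      exact hSS x (h1 hx) m (h1 hm)
    have h3 : LieAlgebra.derivedSeries ℂ F 3 ≤ ⊥ := by
      rw [e3, LieSubmodule.lie_le_iff]
      intro x hx m hm
      obtain ⟨s, rfl⟩ := Submodule.mem_span_singleton.mp (h2 hx)
      obtain ⟨t, rfl⟩ := Submodule.mem_span_singleton.mp (h2 hm)
      have : ⁅s • X5, t • X5⁆ = (0 : F) := by
        rw [smul_lie, lie_smul, lie_self, smul_zero, smul_zero]
      rw [this]
      exact (⊥ : LieIdeal ℂ F).zero_mem
    exact LieAlgebra.IsSolvable.mk (le_bot_iff.mp h3)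
  · -- Heisenberg
    refine ⟨N, X2, -X4, ((-1/3 : ℂ)) • X3, X5, ?_, ?_, ?_, ?_, ?_, ?_, ?_, ?_, ?_, ?_, ?_, ?_⟩
    · apply le_antisymm
      · rw [Submodule.span_le]
        intro g hg
        simp only [Set.mem_insert_iff, Set.mem_singleton_iff] at hg
        rcases hg with rfl | rfl | rfl | rfl | rfl
        · exact hN
        · exact hX2m
        · exact neg_mem hX4m
        · exact Submodule.smul_mem _ _ hX3m
        · exact hX5m
      · rw [Submodule.span_le]
        intro g hg
        simp only [Set.mem_insert_iff, Set.mem_singleton_iff] at hg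
        rcases hg with rfl | rfl | rfl | rfl | rfl
        · exact Submodule.subset_span (by simp)
        · exact Submodule.subset_span (by simp)
        · have h : ((-1/3 : ℂ)) • g ∈
              Submodule.span ℂ ({N, X2, -X4, ((-1/3 : ℂ)) • g, X5} : Set F) :=
            Submodule.subset_span (by simp)
          have h2 := Submodule.smul_mem _ (-3 : ℂ) h
          simpa [smul_smul, show (-3 : ℂ) * (-1/3) = 1 by norm_num] using h2
        · have h : -g ∈
              Submodule.span ℂ ({N, X2, -g, ((-1/3 : ℂ)) • X3, X5} : Set F) :=
            Submodule.subset_span (by simp)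
          simpa using neg_mem h
        · exact Submodule.subset_span (by simp)
    · apply Fintype.linearIndependent_iff.mpr
      intro g hg
      simp only [Fin.sum_univ_five, cw0, cw1, cw2, cw3, cw4] at hg
      have key : ∑ i : Fin 7,
          (![0, g 0, 0, g 1, (-1/3) * g 3, -(g 2), g 4] : Fin 7 → ℂ) i •
            (![T, N, X1, X2, X3, X4, X5] i) = 0 := by
        simp only [Fin.sum_univ_seven, cv0, cv1, cv2, cv3, cv4, cv5, cv6]
        linear_combination (norm := module) hg
      have hz := Fintype.linearIndependent_iff.mp hbindep _ key
      intro i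
      fin_cases i
      · have h := hz 1; rw [cv1] at h; exact h
      · have h := hz 3; rw [cv3] at h; exact h
      · have h := hz 5; rw [cv5] at h; exact neg_eq_zero.mp h
      · have h := hz 4; rw [cv4] at h
        have : g 3 = 0 := by linear_combination (-3 : ℂ) * h
        exact this
      · have h := hz 6; rw [cv6] at h; exact h
    · rw [lie_neg, hb15, neg_neg]
    · rw [lie_smul, hb34, smul_smul]; norm_num
    · exact hb13
    · rw [lie_smul, hb14, smul_zero]
    · exact hb16
    · rw [lie_neg, hb35, neg_zero]
    · exact hb36
    · rw [neg_lie, lie_smul, rb45, smul_zero, neg_zero]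
    · rw [neg_lie, hb56, neg_zero]
    · rw [smul_lie, hb46, smul_zero]
  · -- center
    intro y hy
    constructor
    · intro hcen
      have hy' : y ∈ Submodule.span ℂ (Set.range ![N, X2, X3, X4, X5]) := by
        rw [range5]; exact hy
      obtain ⟨g, hgy⟩ := Submodule.mem_span_range_iff_exists_fun ℂ |>.mp hy'
      simp only [Fin.sum_univ_five, cw0, cw1, cw2, cw3, cw4] at hgy
      have eN : ⁅N, y⁆ = (-(g 3)) • X5 := by
        rw [← hgy]
        simp only [lie_add, lie_smul, lie_self, hb13, hb14, hb15, hb16]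
        module
      have eX2 : ⁅X2, y⁆ = (-3 * g 2) • X5 := by
        rw [← hgy]
        simp only [lie_add, lie_smul, lie_self, rb13, hb34, hb35, hb36]
        module
      have eX3 : ⁅X3, y⁆ = (3 * g 1) • X5 := by
        rw [← hgy]
        simp only [lie_add, lie_smul, lie_self, rb14, rb34, hb45, hb46]
        module
      have eX4 : ⁅X4, y⁆ = (g 0) • X5 := by
        rw [← hgy]
        simp only [lie_add, lie_smul, lie_self, rb15, rb35, rb45, hb56]
        module
      have h3 : g 3 = 0 := neg_eq_zero.mp (hcoeff _ (eN ▸ hcen N hN))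
      have h2 : g 2 = 0 := by
        have h := hcoeff _ (eX2 ▸ hcen X2 hX2m)
        linear_combination (-1/3 : ℂ) * h
      have h1 : g 1 = 0 := by
        have h := hcoeff _ (eX3 ▸ hcen X3 hX3m)
        linear_combination (1/3 : ℂ) * h
      have h0 : g 0 = 0 := hcoeff _ (eX4 ▸ hcen X4 hX4m)
      rw [Submodule.mem_span_singleton]
      refine ⟨g 4, ?_⟩
      rw [← hgy, h0, h1, h2, h3]
      module
    · intro hy5 x hx
      obtain ⟨t, rfl⟩ := Submodule.mem_span_singleton.mp hy5
      rw [lie_smul]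
      suffices h : ⁅x, X5⁆ = 0 by rw [h, smul_zero]
      clear hy
      induction hx using Submodule.span_induction with
      | mem a ha =>
        simp only [Set.mem_insert_iff, Set.mem_singleton_iff] at ha
        rcases ha with rfl | rfl | rfl | rfl | rfl
        · exact hb16
        · exact hb36
        · exact hb46
        · exact hb56
        · exact lie_self _
      | zero => rw [zero_lie]
      | add a b ha hb iha ihb => rw [add_lie, iha, ihb, add_zero]
      | smul s a ha iha => rw [smul_lie, iha, smul_zero]
  · -- sup
    have hT : T ∈ Submodule.span ℂ ({T, X1} : Set F) ⊔
        Submodule.span ℂ ({N, X2, X3, X4, X5} : Set F) :=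
      Submodule.mem_sup_left (Submodule.subset_span (by simp))
    have hX1 : X1 ∈ Submodule.span ℂ ({T, X1} : Set F) ⊔
        Submodule.span ℂ ({N, X2, X3, X4, X5} : Set F) :=
      Submodule.mem_sup_left (Submodule.subset_span (by simp))
    have hNs : N ∈ Submodule.span ℂ ({T, X1} : Set F) ⊔
        Submodule.span ℂ ({N, X2, X3, X4, X5} : Set F) := Submodule.mem_sup_right hN
    have hX2s : X2 ∈ Submodule.span ℂ ({T, X1} : Set F) ⊔
        Submodule.span ℂ ({N, X2, X3, X4, X5} : Set F) := Submodule.mem_sup_right hX2m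
    have hX3s : X3 ∈ Submodule.span ℂ ({T, X1} : Set F) ⊔
        Submodule.span ℂ ({N, X2, X3, X4, X5} : Set F) := Submodule.mem_sup_right hX3m
    have hX4s : X4 ∈ Submodule.span ℂ ({T, X1} : Set F) ⊔
        Submodule.span ℂ ({N, X2, X3, X4, X5} : Set F) := Submodule.mem_sup_right hX4m
    have hX5s : X5 ∈ Submodule.span ℂ ({T, X1} : Set F) ⊔
        Submodule.span ℂ ({N, X2, X3, X4, X5} : Set F) := Submodule.mem_sup_right hX5m
    rw [eq_top_iff, ← hspan7, Submodule.span_le]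
    intro g hg
    simp only [Set.mem_insert_iff, Set.mem_singleton_iff] at hg
    rcases hg with rfl | rfl | rfl | rfl | rfl | rfl | rfl
    · exact hT
    · exact hNs
    · exact hX1
    · exact hX2s
    · exact hX3s
    · exact hX4s
    · exact hX5s
  · -- inf
    rw [eq_bot_iff]
    intro x hx
    obtain ⟨hxA, hxB⟩ := Submodule.mem_inf.mp hx
    obtain ⟨a, b, hab⟩ := Submodule.mem_span_pair.mp hxA
    have hxB' : x ∈ Submodule.span ℂ (Set.range ![N, X2, X3, X4, X5]) := by
      rw [range5]; exact hxB
    obtain ⟨g, hg⟩ := Submodule.mem_span_range_iff_exists_fun ℂ |>.mp hxB'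
    simp only [Fin.sum_univ_five, cw0, cw1, cw2, cw3, cw4] at hg
    have key : ∑ i : Fin 7,
        (![a, -(g 0), b, -(g 1), -(g 2), -(g 3), -(g 4)] : Fin 7 → ℂ) i •
          (![T, N, X1, X2, X3, X4, X5] i) = 0 := by
      simp only [Fin.sum_univ_seven, cv0, cv1, cv2, cv3, cv4, cv5, cv6]
      linear_combination (norm := module) hab - hg
    have hz := Fintype.linearIndependent_iff.mp hbindep _ key
    have ha : a = 0 := by have h := hz 0; rw [cv0] at h; exact h
    have hbz : b = 0 := by have h := hz 2; rw [cv2] at h; exact h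
    rw [Submodule.mem_bot, ← hab, ha, hbz]
    module
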